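/- For every natural number n there exists a constant C_n such that every finite subgroup of GL(n, ℤ) has at most C_n elements. -/

import Mathlib

open Matrix Finset

/-- entries of powers are divisible by powers. -/
private lemma entry_pow_dvd {n : ℕ} (c : ℤ) (D : Matrix (Fin n) (Fin n) ℤ)
    (hD : ∀ i j, c ∣ D i j) : ∀ (m : ℕ) (i j : Fin n), c ^ m ∣ (D ^ m) i j := by
  intro m
  induction m with
  | zero => intro i j; simp
  | succ m ih =>
    intro i j
    rw [pow_succ D, Matrix.mul_apply, pow_succ c]
    exact Finset.dvd_sum fun l _ => mul_dvd_mul (ih i l) (hD l j)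

private lemma key_step {n : ℕ} (q k : ℕ) (hq : q.Prime) (hk : 1 ≤ k)
    (D : Matrix (Fin n) (Fin n) ℤ) (hD : ∀ i j, (3:ℤ)^k ∣ D i j)
    (h1 : (1 + D)^q = 1) : ∀ i j, (3:ℤ)^(k+1) ∣ D i j := by
  have hpow := entry_pow_dvd ((3:ℤ)^k) D hD
  have hq2 := hq.two_le
  rw [add_comm, (Commute.one_right D).add_pow q] at h1
  simp only [one_pow, mul_one] at h1
  have hset : Finset.range (q+1) = insert 0 (insert 1 (Finset.Ico 2 (q+1))) := by
    ext x; simp only [Finset.mem_range, Finset.mem_insert, Finset.mem_Ico]; omega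
  rw [hset, Finset.sum_insert (by simp), Finset.sum_insert (by simp)] at h1
  simp only [pow_zero, pow_one, Nat.choose_zero_right, Nat.choose_one_right, Nat.cast_one,
    one_mul, mul_one] at h1
  have hDq : D * ((q : ℕ) : Matrix (Fin n) (Fin n) ℤ)
      = -∑ m ∈ Finset.Ico 2 (q+1), D ^ m * ((q.choose m : ℕ) : Matrix (Fin n) (Fin n) ℤ) := by
    have h2 : D * ((q:ℕ) : Matrix (Fin n) (Fin n) ℤ)
        + ∑ m ∈ Finset.Ico 2 (q+1), D ^ m * ((q.choose m : ℕ) : Matrix (Fin n) (Fin n) ℤ) = 0 := by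
      have h3 : (1 : Matrix (Fin n) (Fin n) ℤ)
          + (D * ((q:ℕ) : Matrix (Fin n) (Fin n) ℤ)
          + ∑ m ∈ Finset.Ico 2 (q+1), D ^ m * ((q.choose m : ℕ) : Matrix (Fin n) (Fin n) ℤ))
          = 1 + 0 := by rw [add_zero]; exact h1
      exact add_left_cancel h3
    exact eq_neg_of_add_eq_zero_left h2
  intro i j
  have e1 : ∀ (X : Matrix (Fin n) (Fin n) ℤ) (c : ℕ),
      (X * ((c:ℕ) : Matrix (Fin n) (Fin n) ℤ)) i j = (c:ℤ) * X i j := by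
    intro X c; rw [← Matrix.diagonal_natCast, Matrix.mul_diagonal]; ring
  have hentry := congrArg (fun X : Matrix (Fin n) (Fin n) ℤ => X i j) hDq
  simp only [Matrix.neg_apply, Matrix.sum_apply, e1] at hentry
  -- hentry : (q:ℤ) * D i j = -∑ m ∈ Ico 2 (q+1), (q.choose m : ℤ) * (D^m) i j
  by_cases hq3 : q = 3
  · subst hq3
    have hterm : ∀ m ∈ Finset.Ico 2 (3+1),
        (3:ℤ)^(2*k+1) ∣ ((Nat.choose 3 m : ℕ):ℤ) * (D^m) i j := by
      intro m hm
      simp only [Finset.mem_Ico] at hm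
      obtain ⟨hm1, hm2⟩ := hm
      interval_cases m
      · obtain ⟨e, he⟩ := hpow 2 i j
        refine ⟨e, ?_⟩
        have : ((3:ℤ)^k)^2 = 3^(2*k) := by rw [← pow_mul]; ring_nf
        rw [he, this]
        norm_num [Nat.choose]
        ring
      · have h3k : (3:ℤ)^(2*k+1) ∣ ((3:ℤ)^k)^3 := by
          rw [← pow_mul]; exact pow_dvd_pow 3 (by omega)
        exact Dvd.dvd.mul_left (h3k.trans (hpow 3 i j)) _
    have hsd : (3:ℤ)^(2*k+1) ∣ (3:ℤ) * D i j := by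
      have : ((3:ℕ):ℤ) = (3:ℤ) := by norm_num
      rw [← this, hentry]
      exact dvd_neg.mpr (Finset.dvd_sum hterm)
    obtain ⟨e, he⟩ := hsd
    have hd : D i j = 3^(2*k) * e := by
      have h3 : (3:ℤ) ≠ 0 := by norm_num
      apply mul_left_cancel₀ h3
      rw [he, pow_succ]; ring
    exact dvd_trans (pow_dvd_pow 3 (by omega)) ⟨e, hd⟩
  · have hterm : ∀ m ∈ Finset.Ico 2 (q+1),
        (3:ℤ)^(2*k) ∣ ((Nat.choose q m : ℕ):ℤ) * (D^m) i j := by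
      intro m hm
      simp only [Finset.mem_Ico] at hm
      have h3k : (3:ℤ)^(2*k) ∣ ((3:ℤ)^k)^m := by
        rw [← pow_mul]
        apply pow_dvd_pow 3
        have := Nat.mul_le_mul_left k hm.1
        omega
      exact Dvd.dvd.mul_left (h3k.trans (hpow m i j)) _
    have hsd : (3:ℤ)^(2*k) ∣ (q:ℤ) * D i j := by
      rw [hentry]; exact dvd_neg.mpr (Finset.dvd_sum hterm)
    have hcop : IsCoprime ((3:ℤ)^(2*k)) (q:ℤ) := by
      apply IsCoprime.pow_left
      rw [show ((3:ℤ)) = ((3:ℕ):ℤ) by norm_num, Nat.isCoprime_iff_coprime]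
      exact (Nat.coprime_primes (by norm_num) hq).mpr (by omega)
    exact dvd_trans (pow_dvd_pow 3 (by omega)) (hcop.dvd_of_dvd_mul_left hsd)

private lemma entries_zero {n : ℕ} (q : ℕ) (hq : q.Prime) (D : Matrix (Fin n) (Fin n) ℤ)
    (hD : ∀ i j, (3:ℤ) ∣ D i j) (h1 : (1 + D)^q = 1) : D = 0 := by
  have hall : ∀ (t : ℕ) (i j : Fin n), (3:ℤ)^(t+1) ∣ D i j := by
    intro t
    induction t with
    | zero => simpa using hD
    | succ t ih => exact key_step q (t+1) hq (by omega) D ih h1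
  ext i j
  rw [Matrix.zero_apply]
  by_contra hd
  have habs : (3:ℤ)^(D i j).natAbs.succ ≤ |D i j| :=
    Int.le_of_dvd (abs_pos.mpr hd) ((dvd_abs _ _).mpr (hall (D i j).natAbs i j))
  rw [Int.abs_eq_natAbs] at habs
  have hcast : ((3:ℕ):ℤ)^(D i j).natAbs.succ ≤ ((D i j).natAbs : ℤ) := by exact_mod_cast habs
  have hle : (3:ℕ)^(D i j).natAbs.succ ≤ (D i j).natAbs := by exact_mod_cast hcast
  have hlt : (D i j).natAbs < 3 ^ (D i j).natAbs := Nat.lt_pow_self (a := 3) (by norm_num)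
  have hmono : (3:ℕ)^(D i j).natAbs ≤ (3:ℕ)^(D i j).natAbs.succ :=
    Nat.pow_le_pow_right (by norm_num) (Nat.le_succ _)
  omega

private lemma pow_cong {n : ℕ} (X : Matrix (Fin n) (Fin n) ℤ)
    (hX : ∀ i j, (3:ℤ) ∣ (X - 1) i j) : ∀ (t : ℕ) (i j), (3:ℤ) ∣ (X^t - 1) i j := by
  intro t
  induction t with
  | zero => simp
  | succ t ih =>
    intro i j
    have key : X^t * (X - 1) + (X^t - 1) = X^(t+1) - 1 := by
      rw [mul_sub, mul_one, ← pow_succ]; abel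
    rw [← key, Matrix.add_apply]
    apply dvd_add _ (ih i j)
    rw [Matrix.mul_apply]
    exact Finset.dvd_sum fun l _ => Dvd.dvd.mul_left (hX l j) _

private lemma fin_order_eq_one {n : ℕ} (g : Matrix.GeneralLinearGroup (Fin n) ℤ)
    (hg : ∀ i j, (3:ℤ) ∣ ((g : Matrix (Fin n) (Fin n) ℤ) - 1) i j)
    (hfin : IsOfFinOrder g) : g = 1 := by
  by_contra hne
  set m := orderOf g with hm
  have hm0 : 0 < m := hfin.orderOf_pos
  have hm1 : m ≠ 1 := fun h => hne (orderOf_eq_one_iff.mp h)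
  have hqp : Nat.Prime m.minFac := Nat.minFac_prime hm1
  set q := m.minFac with hqdef
  set h := g ^ (m / q) with hh
  have hhq : h ^ q = 1 := by
    rw [hh, ← pow_mul, Nat.div_mul_cancel (Nat.minFac_dvd m)]
    exact pow_orderOf_eq_one g
  have hhc : ∀ i j, (3:ℤ) ∣ (((h : Matrix (Fin n) (Fin n) ℤ)) - 1) i j := by
    have := pow_cong (g : Matrix (Fin n) (Fin n) ℤ) hg (m / q)
    simpa [hh, Units.val_pow_eq_pow_val] using this
  have h1D : (1 + ((h : Matrix (Fin n) (Fin n) ℤ) - 1)) ^ q = 1 := by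
    rw [add_sub_cancel, ← Units.val_pow_eq_pow_val, hhq, Units.val_one]
  have hDzero := entries_zero q hqp _ hhc h1D
  have hhone : h = 1 := by
    ext1
    have : (h : Matrix (Fin n) (Fin n) ℤ) - 1 = 0 := hDzero
    rw [sub_eq_zero] at this
    simpa using this
  have hdvd : m ∣ m / q := orderOf_dvd_of_pow_eq_one hhone
  have hqm : q ≤ m := Nat.minFac_le hm0
  have hq2 := hqp.two_le
  have hpos : 0 < m / q := Nat.div_pos hqm (by omega)
  have hle := Nat.le_of_dvd hpos hdvd
  have hlt : m / q < m := Nat.div_lt_self hm0 hqp.one_lt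
  omega

/-- (Minkowski) For every `n` there is a constant `C` such that every finite subgroup of
`GL(n, ℤ)` has at most `C` elements. -/
theorem stmt9 (n : ℕ) :
    ∃ C : ℕ, ∀ H : Subgroup (Matrix.GeneralLinearGroup (Fin n) ℤ),
      Finite H → Nat.card H ≤ C := by
  classical
  refine ⟨Nat.card (Matrix.GeneralLinearGroup (Fin n) (ZMod 3)), fun H hH => ?_⟩
  set φ := Matrix.GeneralLinearGroup.map (n := Fin n) (Int.castRingHom (ZMod 3)) with hφ
  have hinj : Function.Injective (φ.comp H.subtype) := by
    rw [injective_iff_map_eq_one]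
    intro a ha
    have hfin : IsOfFinOrder ((a : Matrix.GeneralLinearGroup (Fin n) ℤ)) :=
      H.subtype.isOfFinOrder (isOfFinOrder_of_finite a)
    have hmat : (((a : Matrix.GeneralLinearGroup (Fin n) ℤ) : Matrix (Fin n) (Fin n) ℤ)).map
        (Int.cast : ℤ → ZMod 3) = 1 := by
      have h0 : φ (a : Matrix.GeneralLinearGroup (Fin n) ℤ) = 1 := ha
      have h1 := congrArg Units.val h0
      simpa [hφ, Matrix.GeneralLinearGroup.map, RingHom.mapMatrix_apply] using h1
    have hg : ∀ i j, (3:ℤ) ∣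
        ((((a : Matrix.GeneralLinearGroup (Fin n) ℤ) : Matrix (Fin n) (Fin n) ℤ)) - 1) i j := by
      intro i j
      rw [show (3:ℤ) = ((3:ℕ):ℤ) by norm_num, ← ZMod.intCast_zmod_eq_zero_iff_dvd]
      have h1 := congrArg (fun X : Matrix (Fin n) (Fin n) (ZMod 3) => X i j) hmat
      simp only [Matrix.map_apply] at h1
      push_cast [Matrix.sub_apply]
      rw [h1]
      by_cases hij : i = j <;> simp [Matrix.one_apply, hij]
    have := fin_order_eq_one _ hg hfin
    exact Subtype.ext (by simpa using this)
  exact Nat.card_le_card_of_injective _ hinj
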